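/- Let 𝔸 = (A, ≤, →, Σ) be an implicative algebra with |A| < κ for a strongly inaccessible cardinal κ, and let W, ∈_W, =_W and the interpretation ‖·‖ be as defined below. For every formula in context φ[x₁,…,xₙ] of the language of set theory there exists r ∈ Σ such that r ≤ ⨅_{ᾱ∈Wⁿ} ⨅_{β̄∈Wⁿ} (((α₁ =_W β₁) × ⋯ × (αₙ =_W βₙ) × ‖φ[x̄]‖(ᾱ)) → ‖φ[x̄]‖(β̄)), where the product of the n+1 factors is the iterated × operation. -/

import Mathlib

universe u

local infixl:65 " ♯ " => max

/-- An implicative algebra `𝔸 = (A, ≤, →, Σ)`:  a complete lattice `(A, ≤)` together with an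
implication `imp` which is antitone in its first argument, monotone in its second argument and
turns infima in the second argument into infima, and a separator `Sig ⊆ A` which is upward
closed, closed under modus ponens and contains the combinators `K` and `S`. -/
structure ImplicativeAlgebra (A : Type u) [CompleteLattice A] where
  imp : A → A → A
  imp_antitone : ∀ ⦃a a' b : A⦄, a ≤ a' → imp a' b ≤ imp a b
  imp_monotone : ∀ ⦃a b b' : A⦄, b ≤ b' → imp a b ≤ imp a b'
  imp_sInf : ∀ (a : A) (S : Set A), imp a (sInf S) = ⨅ b ∈ S, imp a b
  Sig : Set A
  Sig_upward : ∀ ⦃a b : A⦄, a ∈ Sig → a ≤ b → b ∈ Sig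
  Sig_mp : ∀ ⦃a b : A⦄, imp a b ∈ Sig → a ∈ Sig → b ∈ Sig
  Sig_K : (⨅ a : A, ⨅ b : A, imp a (imp b a)) ∈ Sig
  Sig_S : (⨅ a : A, ⨅ b : A, ⨅ c : A,
      imp (imp a (imp b c)) (imp (imp a b) (imp a c))) ∈ Sig

namespace ImplicativeAlgebra

variable {A : Type u} [CompleteLattice A]

/-- `a × b := ⨅ x, ((a → (b → x)) → x)`. -/
def times (IA : ImplicativeAlgebra A) (a b : A) : A :=
  ⨅ x : A, IA.imp (IA.imp a (IA.imp b x)) x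

/-- `a + b := ⨅ x, ((a → x) → ((b → x) → x))`. -/
def plus (IA : ImplicativeAlgebra A) (a b : A) : A :=
  ⨅ x : A, IA.imp (IA.imp a x) (IA.imp (IA.imp b x) x)

/-- `∃⃗_{i} f i := ⨅ x, ((⨅ i, (f i → x)) → x)`.  (`∀⃗` is just `⨅`.) -/
def aex (IA : ImplicativeAlgebra A) {ι : Sort*} (f : ι → A) : A :=
  ⨅ x : A, IA.imp (⨅ i, IA.imp (f i) x) x

/-- `φ ⊢_{Σ[I]} ψ` iff `⨅ i, (φ i → ψ i) ∈ Σ`. -/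
def SigLe (IA : ImplicativeAlgebra A) {ι : Sort*} (f g : ι → A) : Prop :=
  (⨅ i, IA.imp (f i) (g i)) ∈ IA.Sig

/-- `φ ≡_{Σ[I]} ψ` iff `φ ⊢_{Σ[I]} ψ` and `ψ ⊢_{Σ[I]} φ`. -/
def SigEquiv (IA : ImplicativeAlgebra A) {ι : Sort*} (f g : ι → A) : Prop :=
  IA.SigLe f g ∧ IA.SigLe g f

end ImplicativeAlgebra

/-- Pre-elements of the cumulative hierarchy of partial functions valued in `A`:
an element is an `A`-labelled family of previously constructed elements, i.e. a partial
function (presented by a family indexed by its domain) from earlier elements to `A`. -/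
inductive PreW (A : Type u) : Type (u + 1)
  | mk (ι : Type u) (fam : ι → PreW A) (val : ι → A)

namespace PreW

variable {A : Type u}

/-- The (index type of the) domain of a partial function. -/
def dom : PreW A → Type u
  | ⟨ι, _, _⟩ => ι

/-- The family of elements of the domain. -/
def fam : (w : PreW A) → w.dom → PreW A
  | ⟨_, f, _⟩ => f

/-- The values in `A` of the partial function. -/
def val : (w : PreW A) → w.dom → A
  | ⟨_, _, v⟩ => v

/-- `w` is hereditarily of size `< κ`:  this carves out exactly the elements of the stage
`W_κ` of the hierarchy (for `κ` inaccessible). -/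
def HSmall (κ : Cardinal.{u}) : PreW A → Prop
  | ⟨ι, f, _⟩ => Cardinal.mk ι < κ ∧ ∀ i, HSmall κ (f i)

theorem HSmall.fam {κ : Cardinal.{u}} :
    ∀ {w : PreW A}, w.HSmall κ → ∀ i : w.dom, (w.fam i).HSmall κ
  | ⟨_, _, _⟩, h, i => h.2 i

/-- The rank of an element of the hierarchy. -/
noncomputable def rank : PreW A → Ordinal.{u}
  | ⟨_, f, _⟩ => ⨆ i, Order.succ (rank (f i))

theorem rank_lt_mk {ι : Type u} (f : ι → PreW A) (v : ι → A) (i : ι) :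
    (f i).rank < (PreW.mk ι f v).rank := by
  have h : Order.succ (f i).rank ≤ ⨆ j, Order.succ (f j).rank := Ordinal.le_iSup _ i
  have : (f i).rank < ⨆ j, Order.succ (f j).rank :=
    lt_of_lt_of_le (Order.lt_succ _) h
  simpa [rank] using this

end PreW

namespace ImplicativeAlgebra

variable {A : Type u} [CompleteLattice A]

/-- `α =_W β`, defined by recursion on rank:
`α =_W β := (α ⊆_W β) × (β ⊆_W α)` where
`α ⊆_W β := ∀⃗_{t ∈ dom α} (α t → (fam α t ∈_W β))` and
`γ ∈_W β := ∃⃗_{s ∈ dom β} (β s × (fam β s =_W γ))`. -/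
noncomputable def eqW (IA : ImplicativeAlgebra A) : PreW A → PreW A → A
  | ⟨ι₁, f₁, v₁⟩, ⟨ι₂, f₂, v₂⟩ =>
    IA.times
      (⨅ t : ι₁, IA.imp (v₁ t)
        (IA.aex fun s : ι₂ => IA.times (v₂ s) (IA.eqW (f₂ s) (f₁ t))))
      (⨅ t : ι₂, IA.imp (v₂ t)
        (IA.aex fun s : ι₁ => IA.times (v₁ s) (IA.eqW (f₁ s) (f₂ t))))
termination_by α β => max α.rank β.rank
decreasing_by
  · exact max_lt (lt_of_lt_of_le (PreW.rank_lt_mk f₂ v₂ s) (le_max_right _ _))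
      (lt_of_lt_of_le (PreW.rank_lt_mk f₁ v₁ t) (le_max_left _ _))
  · exact max_lt (lt_of_lt_of_le (PreW.rank_lt_mk f₁ v₁ s) (le_max_left _ _))
      (lt_of_lt_of_le (PreW.rank_lt_mk f₂ v₂ t) (le_max_right _ _))

/-- `α ∈_W β := ∃⃗_{s ∈ dom β} (β s × (fam β s =_W α))`. -/
noncomputable def memW (IA : ImplicativeAlgebra A) (α β : PreW A) : A :=
  IA.aex fun s : β.dom => IA.times (β.val s) (IA.eqW (β.fam s) α)

/-- `α ⊆_W β := ∀⃗_{t ∈ dom α} (α t → (fam α t ∈_W β))`. -/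
noncomputable def subW (IA : ImplicativeAlgebra A) (α β : PreW A) : A :=
  ⨅ t : α.dom, IA.imp (α.val t) (IA.memW (α.fam t) β)

end ImplicativeAlgebra

/-- The stage `W = W_κ` of the hierarchy: all hereditarily `< κ`-sized elements. -/
def WSet (A : Type u) (κ : Cardinal.{u}) : Type (u + 1) :=
  {w : PreW A // w.HSmall κ}

/-- An element of the domain of `w ∈ W`, as an element of `W`. -/
def WSet.fam {A : Type u} {κ : Cardinal.{u}} (w : WSet A κ) (i : w.1.dom) : WSet A κ :=
  ⟨w.1.fam i, w.2.fam i⟩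

/-- Formulas (in context of length `n`) of the first-order language of set theory, with
(de Bruijn-style) variables `Fin n`, binary predicates `∈` and `=`, connectives `⊥`, `∧`, `∨`,
`→` and quantifiers `∃`, `∀` (binding the last variable of the enlarged context). -/
inductive SetFormula : ℕ → Type
  | bot {n : ℕ} : SetFormula n
  | mem {n : ℕ} (i j : Fin n) : SetFormula n
  | eq {n : ℕ} (i j : Fin n) : SetFormula n
  | and {n : ℕ} (φ ψ : SetFormula n) : SetFormula n
  | or {n : ℕ} (φ ψ : SetFormula n) : SetFormula n
  | imp {n : ℕ} (φ ψ : SetFormula n) : SetFormula n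
  | ex {n : ℕ} (φ : SetFormula (n + 1)) : SetFormula n
  | all {n : ℕ} (φ : SetFormula (n + 1)) : SetFormula n

namespace SetFormula

/-- Renaming of variables (since the only terms of the language of set theory are variables,
substitution is a special case). -/
def rename : {n m : ℕ} → (Fin n → Fin m) → SetFormula n → SetFormula m
  | _, _, _, .bot => .bot
  | _, _, f, .mem i j => .mem (f i) (f j)
  | _, _, f, .eq i j => .eq (f i) (f j)
  | _, _, f, .and φ ψ => .and (φ.rename f) (ψ.rename f)
  | _, _, f, .or φ ψ => .or (φ.rename f) (ψ.rename f)
  | _, _, f, .imp φ ψ => .imp (φ.rename f) (ψ.rename f)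
  | _, _, f, .ex φ => .ex (φ.rename (Fin.snoc (Fin.castSucc ∘ f) (Fin.last _)))
  | _, _, f, .all φ => .all (φ.rename (Fin.snoc (Fin.castSucc ∘ f) (Fin.last _)))

/-- Universal closure `∀x₁ … ∀xₙ φ` of a formula in context of length `n`. -/
def allClose : {n : ℕ} → SetFormula n → SetFormula 0
  | 0, φ => φ
  | _ + 1, φ => allClose (.all φ)

end SetFormula

namespace ImplicativeAlgebra

variable {A : Type u} [CompleteLattice A]

/-- The interpretation `‖φ[x₁,…,xₙ]‖ : Wⁿ → A` of a formula in context, by recursion on the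
structure of `φ`:  atomic formulas are interpreted by `∈_W` and `=_W`, `∧` by `×`, `∨` by `+`,
`→` by `→`, `∃` by `∃⃗` over `W` and `∀` by `∀⃗` (i.e. `⨅`) over `W`. -/
noncomputable def interp (IA : ImplicativeAlgebra A) (κ : Cardinal.{u}) :
    {n : ℕ} → SetFormula n → (Fin n → WSet A κ) → A
  | _, .bot, _ => ⊥
  | _, .mem i j, v => IA.memW (v i).1 (v j).1
  | _, .eq i j, v => IA.eqW (v i).1 (v j).1
  | _, .and φ ψ, v => IA.times (IA.interp κ φ v) (IA.interp κ ψ v)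
  | _, .or φ ψ, v => IA.plus (IA.interp κ φ v) (IA.interp κ ψ v)
  | _, .imp φ ψ, v => IA.imp (IA.interp κ φ v) (IA.interp κ ψ v)
  | _, .ex φ, v => IA.aex fun β : WSet A κ => IA.interp κ φ (Fin.snoc v β)
  | _, .all φ, v => ⨅ β : WSet A κ, IA.interp κ φ (Fin.snoc v β)

end ImplicativeAlgebra

/-! ### Combinatory machinery in an implicative algebra -/

inductive Tm (A : Type u) : Type u
  | K | S | var (k : ℕ) | const (a : A) | app (t u : Tm A)

namespace ImplicativeAlgebra

variable {A : Type u} [CompleteLattice A] (IA : ImplicativeAlgebra A)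

/-- Application in an implicative algebra. -/
def ap (a b : A) : A := sInf {c | a ≤ IA.imp b c}

theorem imp_le_imp {a a' b b' : A} (ha : a' ≤ a) (hb : b ≤ b') :
    IA.imp a b ≤ IA.imp a' b' :=
  le_trans (IA.imp_antitone ha) (IA.imp_monotone hb)

theorem le_imp_ap (a b : A) : a ≤ IA.imp b (IA.ap a b) := by
  rw [ap, IA.imp_sInf]
  exact le_iInf fun c => le_iInf fun hc => hc

theorem ap_le {a b c : A} (h : a ≤ IA.imp b c) : IA.ap a b ≤ c := sInf_le h

theorem ap_mono {a a' b b' : A} (ha : a ≤ a') (hb : b ≤ b') :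
    IA.ap a b ≤ IA.ap a' b' :=
  IA.ap_le (le_trans ha (le_trans (IA.le_imp_ap a' b') (IA.imp_antitone hb)))

theorem le_imp_of_ap_le {t a c : A} (h : IA.ap t a ≤ c) : t ≤ IA.imp a c :=
  le_trans (IA.le_imp_ap t a) (IA.imp_monotone h)

theorem ap_mem {a b : A} (ha : a ∈ IA.Sig) (hb : b ∈ IA.Sig) :
    IA.ap a b ∈ IA.Sig :=
  IA.Sig_mp (IA.Sig_upward ha (IA.le_imp_ap a b)) hb

/-- The combinator `K`. -/
def Kc : A := ⨅ a : A, ⨅ b : A, IA.imp a (IA.imp b a)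

/-- The combinator `S`. -/
def Sc : A := ⨅ a : A, ⨅ b : A, ⨅ c : A,
  IA.imp (IA.imp a (IA.imp b c)) (IA.imp (IA.imp a b) (IA.imp a c))

theorem Kc_mem : IA.Kc ∈ IA.Sig := IA.Sig_K
theorem Sc_mem : IA.Sc ∈ IA.Sig := IA.Sig_S

theorem Kc_le (a b : A) : IA.Kc ≤ IA.imp a (IA.imp b a) :=
  le_trans (iInf_le _ a) (iInf_le _ b)

theorem ap_Kc {a b : A} : IA.ap (IA.ap IA.Kc a) b ≤ a :=
  IA.ap_le (IA.ap_le (IA.Kc_le a b))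

theorem ap_Sc {a b c : A} :
    IA.ap (IA.ap (IA.ap IA.Sc a) b) c ≤ IA.ap (IA.ap a c) (IA.ap b c) := by
  set x := IA.ap (IA.ap a c) (IA.ap b c) with hx
  have ha : a ≤ IA.imp c (IA.imp (IA.ap b c) x) :=
    le_trans (IA.le_imp_ap a c) (IA.imp_monotone (IA.le_imp_ap _ _))
  have hS : IA.Sc ≤ IA.imp (IA.imp c (IA.imp (IA.ap b c) x))
      (IA.imp (IA.imp c (IA.ap b c)) (IA.imp c x)) :=
    le_trans (iInf_le _ c) (le_trans (iInf_le _ (IA.ap b c)) (iInf_le _ x))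
  have h1 : IA.ap IA.Sc a ≤ IA.imp (IA.imp c (IA.ap b c)) (IA.imp c x) :=
    IA.ap_le (le_trans hS (IA.imp_antitone ha))
  have h2 : IA.ap (IA.ap IA.Sc a) b ≤ IA.imp c x :=
    IA.ap_le (le_trans h1 (IA.imp_antitone (IA.le_imp_ap b c)))
  exact IA.ap_le h2

/-- Evaluation of a combinatory term in an environment. -/
def ev : Tm A → List A → A
  | .K, _ => IA.Kc
  | .S, _ => IA.Sc
  | .var k, ρ => ρ.getD k IA.Kc
  | .const a, _ => a
  | .app t u, ρ => IA.ap (ev t ρ) (ev u ρ)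

end ImplicativeAlgebra

namespace Tm

/-- Bracket abstraction binding de Bruijn variable `0`. -/
def abs {A : Type u} : Tm A → Tm A
  | .var 0 => .app (.app .S .K) .K
  | .var (k+1) => .app .K (.var k)
  | .app t u => .app (.app .S t.abs) u.abs
  | .K => .app .K .K
  | .S => .app .K .S
  | .const a => .app .K (.const a)

/-- Terms all of whose constants lie in the separator. -/
def Good {A : Type u} [CompleteLattice A] (IA : ImplicativeAlgebra A) : Tm A → Prop
  | .const a => a ∈ IA.Sig
  | .app t u => t.Good IA ∧ u.Good IA
  | _ => True

end Tm

namespace ImplicativeAlgebra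

variable {A : Type u} [CompleteLattice A] (IA : ImplicativeAlgebra A)

theorem ev_abs_ap (t : Tm A) (ρ : List A) (a : A) :
    IA.ap (IA.ev t.abs ρ) a ≤ IA.ev t (a :: ρ) := by
  induction t with
  | K => simp only [Tm.abs, ev]; exact IA.ap_Kc
  | S => simp only [Tm.abs, ev]; exact IA.ap_Kc
  | const b => simp only [Tm.abs, ev]; exact IA.ap_Kc
  | var k =>
    cases k with
    | zero =>
      simp only [Tm.abs, ev, List.getD_cons_zero]
      exact le_trans IA.ap_Sc IA.ap_Kc
    | succ k =>
      simp only [Tm.abs, ev, List.getD_cons_succ]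
      exact IA.ap_Kc
  | app t u iht ihu =>
    simp only [Tm.abs, ev]
    exact le_trans IA.ap_Sc (IA.ap_mono iht ihu)

theorem ev_mem : ∀ {t : Tm A}, t.Good IA → ∀ {ρ : List A},
    (∀ x ∈ ρ, x ∈ IA.Sig) → IA.ev t ρ ∈ IA.Sig
  | .K, _, _, _ => IA.Kc_mem
  | .S, _, _, _ => IA.Sc_mem
  | .const _, h, _, _ => h
  | .var k, _, ρ, hρ => by
    show ρ.getD k IA.Kc ∈ IA.Sig
    rcases Nat.lt_or_ge k ρ.length with h | h
    · rw [List.getD_eq_getElem _ _ h]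
      exact hρ _ (List.getElem_mem h)
    · rw [List.getD_eq_default _ _ h]
      exact IA.Kc_mem
  | .app t u, h, ρ, hρ => IA.ap_mem (ev_mem h.1 hρ) (ev_mem h.2 hρ)

theorem Tm.Good.abs' : ∀ {t : Tm A}, t.Good IA → t.abs.Good IA
  | .K, _ => ⟨trivial, trivial⟩
  | .S, _ => ⟨trivial, trivial⟩
  | .const _, h => ⟨trivial, h⟩
  | .var 0, _ => ⟨⟨trivial, trivial⟩, trivial⟩
  | .var (_+1), _ => ⟨trivial, trivial⟩
  | .app _ _, h => ⟨⟨trivial, Tm.Good.abs' h.1⟩, Tm.Good.abs' h.2⟩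

/-- β-reduction step for bounding applications of abstractions. -/
theorem ap_ev_abs {t : Tm A} {ρ : List A} {a c : A}
    (h : IA.ev t (a :: ρ) ≤ c) : IA.ap (IA.ev t.abs ρ) a ≤ c :=
  le_trans (IA.ev_abs_ap t ρ a) h

end ImplicativeAlgebra


namespace ImplicativeAlgebra

variable {A : Type u} [CompleteLattice A] (IA : ImplicativeAlgebra A)

/-! ### Derived logical operations -/

theorem times_ap {p a b h x : A} (hp : p ≤ IA.times a b)
    (hh : h ≤ IA.imp a (IA.imp b x)) : IA.ap p h ≤ x :=
  IA.ap_le (le_trans hp (le_trans (iInf_le _ x) (IA.imp_antitone hh)))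

theorem ap_aex {ι : Sort*} {f : ι → A} {g x : A}
    (h : ∀ i, g ≤ IA.imp (f i) x) : IA.ap (IA.aex f) g ≤ x :=
  IA.ap_le (le_trans (iInf_le _ x) (IA.imp_antitone (le_iInf h)))

theorem aex_ap {ι : Sort*} {f : ι → A} {p g x : A} (hp : p ≤ IA.aex f)
    (h : ∀ i, g ≤ IA.imp (f i) x) : IA.ap p g ≤ x :=
  IA.ap_le (le_trans hp (le_trans (iInf_le _ x) (IA.imp_antitone (le_iInf h))))

theorem plus_ap {p a b l m x : A} (hp : p ≤ IA.plus a b)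
    (hl : l ≤ IA.imp a x) (hm : m ≤ IA.imp b x) :
    IA.ap (IA.ap p l) m ≤ x :=
  IA.ap_le (IA.ap_le (le_trans hp (le_trans (iInf_le _ x)
    (IA.imp_le_imp hl (IA.imp_antitone hm)))))

/-- The identity combinator. -/
def Ic : A := IA.ev (Tm.var 0).abs []

theorem Ic_mem : IA.Ic ∈ IA.Sig :=
  IA.ev_mem (by simp [Tm.abs, Tm.Good]) (by simp)

theorem ap_Ic {a : A} : IA.ap IA.Ic a ≤ a := IA.ap_ev_abs le_rfl

/-- The pairing combinator `λ x y f. f x y`. -/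
def Pc : A := IA.ev (((Tm.var 0).app (.var 2) |>.app (.var 1)).abs.abs.abs) []

theorem Pc_mem : IA.Pc ∈ IA.Sig :=
  IA.ev_mem (by simp [Tm.abs, Tm.Good]) (by simp)

theorem pair_le {a a' b b' : A} (ha : a ≤ a') (hb : b ≤ b') :
    IA.ap (IA.ap IA.Pc a) b ≤ IA.times a' b' := by
  refine le_iInf fun x => IA.le_imp_of_ap_le ?_
  refine le_trans (IA.ap_mono (IA.ap_mono (IA.ap_ev_abs le_rfl) le_rfl) le_rfl) ?_
  refine le_trans (IA.ap_mono (IA.ap_ev_abs le_rfl) le_rfl) ?_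
  refine IA.ap_ev_abs ?_
  show IA.ap (IA.ap (IA.imp a' (IA.imp b' x)) a) b ≤ x
  refine IA.ap_le (le_trans (IA.ap_le (IA.imp_antitone ha)) (IA.imp_antitone hb))

/-- The existential-introduction combinator `λ a g. g a`. -/
def EIc : A := IA.ev (((Tm.var 0).app (.var 1)).abs.abs) []

theorem EIc_mem : IA.EIc ∈ IA.Sig :=
  IA.ev_mem (by simp [Tm.abs, Tm.Good]) (by simp)

theorem aexI_le {ι : Sort*} {f : ι → A} (i : ι) {a : A} (ha : a ≤ f i) :
    IA.ap IA.EIc a ≤ IA.aex f := by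
  refine le_iInf fun x => IA.le_imp_of_ap_le ?_
  refine le_trans (IA.ap_mono (IA.ap_ev_abs le_rfl) le_rfl) ?_
  refine IA.ap_ev_abs ?_
  show IA.ap (⨅ j, IA.imp (f j) x) a ≤ x
  exact IA.ap_le (le_trans (iInf_le _ i) (IA.imp_antitone ha))

/-- Left injection `λ a l m. l a`. -/
def INLc : A := IA.ev (((Tm.var 1).app (.var 2)).abs.abs.abs) []

/-- Right injection `λ a l m. m a`. -/
def INRc : A := IA.ev (((Tm.var 0).app (.var 2)).abs.abs.abs) []

theorem INLc_mem : IA.INLc ∈ IA.Sig :=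
  IA.ev_mem (by simp [Tm.abs, Tm.Good]) (by simp)

theorem INRc_mem : IA.INRc ∈ IA.Sig :=
  IA.ev_mem (by simp [Tm.abs, Tm.Good]) (by simp)

theorem inl_le {a a' b' : A} (ha : a ≤ a') :
    IA.ap IA.INLc a ≤ IA.plus a' b' := by
  refine le_iInf fun x => IA.le_imp_of_ap_le (IA.le_imp_of_ap_le ?_)
  refine le_trans (IA.ap_mono (IA.ap_mono (IA.ap_ev_abs le_rfl) le_rfl) le_rfl) ?_
  refine le_trans (IA.ap_mono (IA.ap_ev_abs le_rfl) le_rfl) ?_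
  refine IA.ap_ev_abs ?_
  show IA.ap (IA.imp a' x) a ≤ x
  exact IA.ap_le (IA.imp_antitone ha)

theorem inr_le {a b b' : A} (hb : b ≤ b') :
    IA.ap IA.INRc b ≤ IA.plus a b' := by
  refine le_iInf fun x => IA.le_imp_of_ap_le (IA.le_imp_of_ap_le ?_)
  refine le_trans (IA.ap_mono (IA.ap_mono (IA.ap_ev_abs le_rfl) le_rfl) le_rfl) ?_
  refine le_trans (IA.ap_mono (IA.ap_ev_abs le_rfl) le_rfl) ?_
  refine IA.ap_ev_abs ?_
  show IA.ap (IA.imp b' x) b ≤ x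
  exact IA.ap_le (IA.imp_antitone hb)

/-- First projection: apply a pair to `K`. -/
theorem times_fst {p a b : A} (hp : p ≤ IA.times a b) : IA.ap p IA.Kc ≤ a :=
  IA.times_ap hp (IA.Kc_le a b)

/-- Second projection: apply a pair to `K I`. -/
theorem times_snd {p a b : A} (hp : p ≤ IA.times a b) :
    IA.ap p (IA.ap IA.Kc IA.Ic) ≤ b := by
  refine IA.times_ap hp (IA.le_imp_of_ap_le ?_)
  exact le_trans IA.ap_Kc (IA.le_imp_of_ap_le IA.ap_Ic)

theorem KIc_mem : IA.ap IA.Kc IA.Ic ∈ IA.Sig := IA.ap_mem IA.Kc_mem IA.Ic_mem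

/-- Guarded fixed points: for every `g ∈ Σ` there is `θ ∈ Σ` with `θ ≤ g θ`. -/
theorem exists_fix (g : A) (hg : g ∈ IA.Sig) :
    ∃ θ ∈ IA.Sig, θ ≤ IA.ap g θ := by
  set w : A := IA.ev ((Tm.app (.const g) ((Tm.var 0).app (.var 0))).abs) [] with hw
  have hwS : w ∈ IA.Sig :=
    IA.ev_mem (by simp [Tm.abs, Tm.Good, hg]) (by simp)
  exact ⟨IA.ap w w, IA.ap_mem hwS hwS, IA.ap_ev_abs le_rfl⟩

/-- `eqW` unfolded in terms of `subW`. -/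
theorem eqW_def (α β : PreW A) :
    IA.eqW α β = IA.times (IA.subW α β) (IA.subW β α) := by
  cases α with | mk ι₁ f₁ v₁ =>
  cases β with | mk ι₂ f₂ v₂ =>
  rw [eqW]
  rfl

end ImplicativeAlgebra


theorem PreW.rank_fam_lt {A : Type u} (α : PreW A) (i : α.dom) :
    (α.fam i).rank < α.rank := by
  cases α with | mk ι f v => exact PreW.rank_lt_mk f v i

theorem nadd3_lt {a b c a' b' c' : Ordinal.{u}} (h1 : a < a') (h2 : b < b')
    (h3 : c < c') : a ♯ b ♯ c < a' ♯ b' ♯ c' :=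
  max_lt_max (max_lt_max h1 h2) h3

theorem nadd3_perm (a b c : Ordinal.{u}) : a ♯ b ♯ c = c ♯ b ♯ a := by
  rw [max_comm a b, max_comm _ c, ← max_assoc,
    max_comm c b]

namespace ImplicativeAlgebra

variable {A : Type u} [CompleteLattice A] (IA : ImplicativeAlgebra A)

theorem memW_def (α β : PreW A) : IA.memW α β =
    IA.aex fun s : β.dom => IA.times (β.val s) (IA.eqW (β.fam s) α) := rfl

theorem subW_def (α β : PreW A) : IA.subW α β =
    ⨅ t : α.dom, IA.imp (α.val t) (IA.memW (α.fam t) β) := rfl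

/-! ### The mapper `G` for membership -/

/-- `G = λ r s p. p (λ v q. (s v) (λ p2. p2 (λ vc q2. EI (pair vc (r q2 q)))))`. -/
abbrev Gt : Tm A :=
  (((Tm.var 0).app
    ((((Tm.var 3).app (.var 1)).app
      (((Tm.var 0).app
        (((Tm.const IA.EIc).app
          (((Tm.const IA.Pc).app (.var 1)).app
            (((Tm.var 7).app (.var 0)).app (.var 3)))).abs.abs)).abs)).abs.abs)).abs.abs.abs)

/-- The element interpreting `G`. -/
@[reducible] noncomputable def Gc : A := IA.ev IA.Gt []

theorem Gc_mem : IA.Gc ∈ IA.Sig :=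
  IA.ev_mem (by simp [Gt, Tm.abs, Tm.Good, IA.EIc_mem, IA.Pc_mem]) (by simp)

theorem G_le {r s : A} {x β γ : PreW A}
    (hs : s ≤ IA.subW β γ)
    (hr : ∀ (u : β.dom) (w : γ.dom),
      r ≤ IA.imp (IA.eqW (γ.fam w) (β.fam u))
        (IA.imp (IA.eqW (β.fam u) x) (IA.eqW (γ.fam w) x))) :
    IA.ap (IA.memW x β) (IA.ap (IA.ap IA.Gc r) s) ≤ IA.memW x γ := by
  rw [IA.memW_def x β]
  refine IA.ap_aex fun u => ?_
  refine IA.le_imp_of_ap_le ?_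
  refine le_trans (IA.ap_mono (IA.ap_mono (IA.ev_abs_ap _ _ _) le_rfl) le_rfl) ?_
  refine le_trans (IA.ap_mono (IA.ev_abs_ap _ _ _) le_rfl) ?_
  refine le_trans (IA.ev_abs_ap _ _ _) ?_
  set p : A := IA.times (β.val u) (IA.eqW (β.fam u) x) with hp
  show IA.ap p (IA.ev _ [p, s, r]) ≤ IA.memW x γ
  refine IA.times_ap le_rfl ?_
  refine IA.le_imp_of_ap_le ?_
  refine le_trans (IA.ev_abs_ap _ _ _) ?_
  refine IA.le_imp_of_ap_le ?_
  refine le_trans (IA.ev_abs_ap _ _ _) ?_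
  set q : A := IA.eqW (β.fam u) x with hq
  set v : A := β.val u with hv
  show IA.ap (IA.ap s v) (IA.ev _ [q, v, p, s, r]) ≤ IA.memW x γ
  refine le_trans (IA.ap_mono (IA.ap_le (le_trans hs (iInf_le _ u))) le_rfl) ?_
  rw [IA.memW_def (β.fam u) γ]
  refine IA.ap_aex fun w => ?_
  refine IA.le_imp_of_ap_le ?_
  refine le_trans (IA.ev_abs_ap _ _ _) ?_
  set p2 : A := IA.times (γ.val w) (IA.eqW (γ.fam w) (β.fam u)) with hp2
  show IA.ap p2 (IA.ev _ [p2, q, v, p, s, r]) ≤ IA.memW x γ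
  refine IA.times_ap le_rfl ?_
  refine IA.le_imp_of_ap_le ?_
  refine le_trans (IA.ev_abs_ap _ _ _) ?_
  refine IA.le_imp_of_ap_le ?_
  refine le_trans (IA.ev_abs_ap _ _ _) ?_
  show IA.ap IA.EIc (IA.ap (IA.ap IA.Pc (γ.val w))
      (IA.ap (IA.ap r (IA.eqW (γ.fam w) (β.fam u))) (IA.eqW (β.fam u) x)))
    ≤ IA.memW x γ
  rw [IA.memW_def x γ]
  refine IA.aexI_le w (IA.pair_le le_rfl ?_)
  exact IA.ap_le (IA.ap_le (hr u w))

end ImplicativeAlgebra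


namespace ImplicativeAlgebra

variable {A : Type u} [CompleteLattice A] (IA : ImplicativeAlgebra A)

/-! ### Reflexivity, symmetry, transitivity of `=_W`, congruence of `∈_W` -/

theorem exists_refl : ∃ r ∈ IA.Sig, ∀ α : PreW A, r ≤ IA.eqW α α := by
  set Qt : Tm A := ((Tm.const IA.EIc).app
      (((Tm.const IA.Pc).app (.var 0)).app (.var 1))).abs with hQt
  obtain ⟨θ, θmem, θfix⟩ :=
    IA.exists_fix (IA.ev ((((Tm.const IA.Pc).app Qt).app Qt).abs) [])
      (IA.ev_mem (by simp [hQt, Tm.abs, Tm.Good, IA.EIc_mem, IA.Pc_mem]) (by simp))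
  refine ⟨θ, θmem, ?_⟩
  have main : ∀ (o : Ordinal.{u}) (α : PreW A), α.rank = o → θ ≤ IA.eqW α α := by
    intro o
    induction o using Ordinal.induction with
    | h o IH =>
      rintro α rfl
      refine le_trans θfix ?_
      refine le_trans (IA.ev_abs_ap _ _ _) ?_
      show IA.ap (IA.ap IA.Pc (IA.ev Qt [θ])) (IA.ev Qt [θ]) ≤ IA.eqW α α
      have hQ : IA.ev Qt [θ] ≤ IA.subW α α := by
        rw [IA.subW_def]
        refine le_iInf fun t => IA.le_imp_of_ap_le ?_
        refine le_trans (IA.ev_abs_ap _ _ _) ?_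
        show IA.ap IA.EIc (IA.ap (IA.ap IA.Pc (α.val t)) θ) ≤ IA.memW (α.fam t) α
        rw [IA.memW_def]
        refine IA.aexI_le t (IA.pair_le le_rfl ?_)
        exact IH (α.fam t).rank (PreW.rank_fam_lt α t) (α.fam t) rfl
      rw [IA.eqW_def]
      exact IA.pair_le hQ hQ
  exact fun α => main α.rank α rfl

theorem exists_sym : ∃ r ∈ IA.Sig, ∀ α β : PreW A,
    r ≤ IA.imp (IA.eqW α β) (IA.eqW β α) := by
  refine ⟨IA.ev (((Tm.var 0).app
      ((((Tm.const IA.Pc).app (.var 0)).app (.var 1)).abs.abs)).abs) [],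
    IA.ev_mem (by simp [Tm.abs, Tm.Good, IA.Pc_mem]) (by simp), fun α β => ?_⟩
  refine IA.le_imp_of_ap_le ?_
  refine le_trans (IA.ev_abs_ap _ _ _) ?_
  show IA.ap (IA.eqW α β) (IA.ev _ [IA.eqW α β]) ≤ IA.eqW β α
  rw [IA.eqW_def α β, IA.eqW_def β α]
  refine IA.times_ap le_rfl ?_
  refine IA.le_imp_of_ap_le ?_
  refine le_trans (IA.ev_abs_ap _ _ _) ?_
  refine IA.le_imp_of_ap_le ?_
  refine le_trans (IA.ev_abs_ap _ _ _) ?_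
  show IA.ap (IA.ap IA.Pc (IA.subW β α)) (IA.subW α β) ≤ _
  exact IA.pair_le le_rfl le_rfl

/-- The composition combinator `λ f g a. (f a) g`. -/
abbrev Dt : Tm A := (((Tm.var 2).app (.var 0)).app (.var 1)).abs.abs.abs

@[reducible] noncomputable def Dc : A := IA.ev Dt []

theorem Dc_mem : IA.Dc ∈ IA.Sig :=
  IA.ev_mem (by simp [Dt, Tm.abs, Tm.Good]) (by simp)

theorem exists_trans : ∃ r ∈ IA.Sig, ∀ α β γ : PreW A,
    r ≤ IA.imp (IA.eqW α β) (IA.imp (IA.eqW β γ) (IA.eqW α γ)) := by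
  set KIt : Tm A := Tm.app .K (.const IA.Ic) with hKIt
  set s1t : Tm A := ((Tm.const IA.Dc).app ((Tm.var 1).app .K)).app
      (((Tm.const IA.Gc).app (.var 2)).app ((Tm.var 0).app .K)) with hs1
  set s2t : Tm A := ((Tm.const IA.Dc).app ((Tm.var 0).app KIt)).app
      (((Tm.const IA.Gc).app (.var 2)).app ((Tm.var 1).app KIt)) with hs2
  obtain ⟨θ, θmem, θfix⟩ := IA.exists_fix
      (IA.ev ((((Tm.const IA.Pc).app s1t).app s2t).abs.abs.abs) [])
      (IA.ev_mem (by simp [hs1, hs2, hKIt, Tm.abs, Tm.Good,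
        IA.Pc_mem, IA.Dc_mem, IA.Gc_mem, IA.Ic_mem]) (by simp))
  refine ⟨θ, θmem, ?_⟩
  have main : ∀ (o : Ordinal.{u}) (α β γ : PreW A),
      α.rank ♯ β.rank ♯ γ.rank = o →
      θ ≤ IA.imp (IA.eqW α β) (IA.imp (IA.eqW β γ) (IA.eqW α γ)) := by
    intro o
    induction o using Ordinal.induction with
    | h o IH =>
      rintro α β γ rfl
      refine le_trans θfix ?_
      refine IA.le_imp_of_ap_le (IA.le_imp_of_ap_le ?_)
      refine le_trans (IA.ap_mono (IA.ap_mono (IA.ev_abs_ap _ _ _) le_rfl) le_rfl) ?_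
      refine le_trans (IA.ap_mono (IA.ev_abs_ap _ _ _) le_rfl) ?_
      refine le_trans (IA.ev_abs_ap _ _ _) ?_
      show IA.ap (IA.ap IA.Pc (IA.ev s1t [IA.eqW β γ, IA.eqW α β, θ]))
          (IA.ev s2t [IA.eqW β γ, IA.eqW α β, θ]) ≤ IA.eqW α γ
      rw [IA.eqW_def α γ]
      refine IA.pair_le ?_ ?_
      · rw [IA.subW_def]
        refine le_iInf fun t => IA.le_imp_of_ap_le ?_
        show IA.ap (IA.ap (IA.ap IA.Dc (IA.ap (IA.eqW α β) IA.Kc))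
            (IA.ap (IA.ap IA.Gc θ) (IA.ap (IA.eqW β γ) IA.Kc))) (α.val t)
          ≤ IA.memW (α.fam t) γ
        refine le_trans (IA.ap_mono (IA.ap_mono (IA.ev_abs_ap _ _ _) le_rfl) le_rfl) ?_
        refine le_trans (IA.ap_mono (IA.ev_abs_ap _ _ _) le_rfl) ?_
        refine le_trans (IA.ev_abs_ap _ _ _) ?_
        show IA.ap (IA.ap (IA.ap (IA.eqW α β) IA.Kc) (α.val t))
            (IA.ap (IA.ap IA.Gc θ) (IA.ap (IA.eqW β γ) IA.Kc)) ≤ IA.memW (α.fam t) γ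
        have hF : IA.ap (IA.ap (IA.eqW α β) IA.Kc) (α.val t) ≤ IA.memW (α.fam t) β :=
          IA.ap_le (le_trans (IA.times_fst (le_of_eq (IA.eqW_def α β)))
            (le_trans (IA.subW_def α β).le (iInf_le _ t)))
        refine le_trans (IA.ap_mono hF le_rfl) ?_
        refine IA.G_le (IA.times_fst (le_of_eq (IA.eqW_def β γ))) fun u w => ?_
        refine IH ((γ.fam w).rank ♯ (β.fam u).rank ♯ (α.fam t).rank) ?_
          (γ.fam w) (β.fam u) (α.fam t) rfl
        rw [nadd3_perm]
        exact nadd3_lt (PreW.rank_fam_lt α t) (PreW.rank_fam_lt β u)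
          (PreW.rank_fam_lt γ w)
      · rw [IA.subW_def]
        refine le_iInf fun t => IA.le_imp_of_ap_le ?_
        show IA.ap (IA.ap (IA.ap IA.Dc (IA.ap (IA.eqW β γ) (IA.ap IA.Kc IA.Ic)))
            (IA.ap (IA.ap IA.Gc θ) (IA.ap (IA.eqW α β) (IA.ap IA.Kc IA.Ic)))) (γ.val t)
          ≤ IA.memW (γ.fam t) α
        refine le_trans (IA.ap_mono (IA.ap_mono (IA.ev_abs_ap _ _ _) le_rfl) le_rfl) ?_
        refine le_trans (IA.ap_mono (IA.ev_abs_ap _ _ _) le_rfl) ?_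
        refine le_trans (IA.ev_abs_ap _ _ _) ?_
        show IA.ap (IA.ap (IA.ap (IA.eqW β γ) (IA.ap IA.Kc IA.Ic)) (γ.val t))
            (IA.ap (IA.ap IA.Gc θ) (IA.ap (IA.eqW α β) (IA.ap IA.Kc IA.Ic)))
          ≤ IA.memW (γ.fam t) α
        have hF : IA.ap (IA.ap (IA.eqW β γ) (IA.ap IA.Kc IA.Ic)) (γ.val t)
            ≤ IA.memW (γ.fam t) β :=
          IA.ap_le (le_trans (IA.times_snd (le_of_eq (IA.eqW_def β γ)))
            (le_trans (IA.subW_def γ β).le (iInf_le _ t)))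
        refine le_trans (IA.ap_mono hF le_rfl) ?_
        refine IA.G_le (IA.times_snd (le_of_eq (IA.eqW_def α β))) fun u w => ?_
        refine IH ((α.fam w).rank ♯ (β.fam u).rank ♯ (γ.fam t).rank) ?_
          (α.fam w) (β.fam u) (γ.fam t) rfl
        exact nadd3_lt (PreW.rank_fam_lt α w) (PreW.rank_fam_lt β u)
          (PreW.rank_fam_lt γ t)
  exact fun α β γ => main _ α β γ rfl

theorem memL_of_trans {T : A} (hTm : T ∈ IA.Sig)
    (hT : ∀ x y z : PreW A,
      T ≤ IA.imp (IA.eqW x y) (IA.imp (IA.eqW y z) (IA.eqW x z))) :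
    ∃ r ∈ IA.Sig, ∀ α α' β : PreW A,
      r ≤ IA.imp (IA.eqW α α') (IA.imp (IA.memW α β) (IA.memW α' β)) := by
  refine ⟨IA.ev (((Tm.var 0).app (((Tm.var 0).app
      (((Tm.const IA.EIc).app (((Tm.const IA.Pc).app (.var 1)).app
        (((Tm.const T).app (.var 0)).app (.var 4)))).abs.abs)).abs)).abs.abs) [],
    IA.ev_mem (by simp [Tm.abs, Tm.Good, IA.EIc_mem, IA.Pc_mem, hTm]) (by simp),
    fun α α' β => ?_⟩
  refine IA.le_imp_of_ap_le (IA.le_imp_of_ap_le ?_)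
  refine le_trans (IA.ap_mono (IA.ev_abs_ap _ _ _) le_rfl) ?_
  refine le_trans (IA.ev_abs_ap _ _ _) ?_
  show IA.ap (IA.memW α β) (IA.ev _ [IA.memW α β, IA.eqW α α']) ≤ IA.memW α' β
  rw [IA.memW_def α β]
  refine IA.ap_aex fun s => IA.le_imp_of_ap_le ?_
  refine le_trans (IA.ev_abs_ap _ _ _) ?_
  show IA.ap (IA.times (β.val s) (IA.eqW (β.fam s) α)) (IA.ev _
      [IA.times (β.val s) (IA.eqW (β.fam s) α),
        IA.aex fun s : β.dom => IA.times (β.val s) (IA.eqW (β.fam s) α),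
        IA.eqW α α']) ≤ IA.memW α' β
  refine IA.times_ap le_rfl ?_
  refine IA.le_imp_of_ap_le ?_
  refine le_trans (IA.ev_abs_ap _ _ _) ?_
  refine IA.le_imp_of_ap_le ?_
  refine le_trans (IA.ev_abs_ap _ _ _) ?_
  show IA.ap IA.EIc (IA.ap (IA.ap IA.Pc (β.val s))
      (IA.ap (IA.ap T (IA.eqW (β.fam s) α)) (IA.eqW α α'))) ≤ IA.memW α' β
  rw [IA.memW_def α' β]
  exact IA.aexI_le s (IA.pair_le le_rfl (IA.ap_le (IA.ap_le (hT _ _ _))))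

theorem memR_of_trans {T : A} (hTm : T ∈ IA.Sig)
    (hT : ∀ x y z : PreW A,
      T ≤ IA.imp (IA.eqW x y) (IA.imp (IA.eqW y z) (IA.eqW x z))) :
    ∃ r ∈ IA.Sig, ∀ α β β' : PreW A,
      r ≤ IA.imp (IA.eqW β β') (IA.imp (IA.memW α β) (IA.memW α β')) := by
  refine ⟨IA.ev (((Tm.var 0).app (((Tm.var 0).app
      (((((Tm.var 4).app .K).app (.var 1)).app
        (((Tm.var 0).app
          (((Tm.const IA.EIc).app (((Tm.const IA.Pc).app (.var 1)).app
            (((Tm.const T).app (.var 0)).app (.var 3)))).abs.abs)).abs)).abs.abs)).abs)).abs.abs) [],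
    IA.ev_mem (by simp [Tm.abs, Tm.Good, IA.EIc_mem, IA.Pc_mem, hTm]) (by simp),
    fun α β β' => ?_⟩
  refine IA.le_imp_of_ap_le (IA.le_imp_of_ap_le ?_)
  refine le_trans (IA.ap_mono (IA.ev_abs_ap _ _ _) le_rfl) ?_
  refine le_trans (IA.ev_abs_ap _ _ _) ?_
  show IA.ap (IA.memW α β) (IA.ev _ [IA.memW α β, IA.eqW β β']) ≤ IA.memW α β'
  rw [IA.memW_def α β]
  refine IA.ap_aex fun s => IA.le_imp_of_ap_le ?_
  refine le_trans (IA.ev_abs_ap _ _ _) ?_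
  show IA.ap (IA.times (β.val s) (IA.eqW (β.fam s) α)) (IA.ev _
      [IA.times (β.val s) (IA.eqW (β.fam s) α),
        IA.aex fun s : β.dom => IA.times (β.val s) (IA.eqW (β.fam s) α),
        IA.eqW β β']) ≤ IA.memW α β'
  refine IA.times_ap le_rfl ?_
  refine IA.le_imp_of_ap_le ?_
  refine le_trans (IA.ev_abs_ap _ _ _) ?_
  refine IA.le_imp_of_ap_le ?_
  refine le_trans (IA.ev_abs_ap _ _ _) ?_
  show IA.ap (IA.ap (IA.ap (IA.eqW β β') IA.Kc) (β.val s))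
      (IA.ev _ [IA.eqW (β.fam s) α, β.val s,
        IA.times (β.val s) (IA.eqW (β.fam s) α),
        IA.aex fun s : β.dom => IA.times (β.val s) (IA.eqW (β.fam s) α),
        IA.eqW β β']) ≤ IA.memW α β'
  have hF : IA.ap (IA.ap (IA.eqW β β') IA.Kc) (β.val s) ≤ IA.memW (β.fam s) β' :=
    IA.ap_le (le_trans (IA.times_fst (le_of_eq (IA.eqW_def β β')))
      (le_trans (IA.subW_def β β').le (iInf_le _ s)))
  refine le_trans (IA.ap_mono hF le_rfl) ?_
  rw [IA.memW_def (β.fam s) β']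
  refine IA.ap_aex fun w => IA.le_imp_of_ap_le ?_
  refine le_trans (IA.ev_abs_ap _ _ _) ?_
  show IA.ap (IA.times (β'.val w) (IA.eqW (β'.fam w) (β.fam s))) (IA.ev _
      [IA.times (β'.val w) (IA.eqW (β'.fam w) (β.fam s)),
        IA.eqW (β.fam s) α, β.val s,
        IA.times (β.val s) (IA.eqW (β.fam s) α),
        IA.aex fun s : β.dom => IA.times (β.val s) (IA.eqW (β.fam s) α),
        IA.eqW β β']) ≤ IA.memW α β'
  refine IA.times_ap le_rfl ?_
  refine IA.le_imp_of_ap_le ?_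
  refine le_trans (IA.ev_abs_ap _ _ _) ?_
  refine IA.le_imp_of_ap_le ?_
  refine le_trans (IA.ev_abs_ap _ _ _) ?_
  show IA.ap IA.EIc (IA.ap (IA.ap IA.Pc (β'.val w))
      (IA.ap (IA.ap T (IA.eqW (β'.fam w) (β.fam s))) (IA.eqW (β.fam s) α)))
    ≤ IA.memW α β'
  rw [IA.memW_def α β']
  exact IA.aexI_le w (IA.pair_le le_rfl (IA.ap_le (IA.ap_le (hT _ _ _))))

end ImplicativeAlgebra


namespace ImplicativeAlgebra

variable {A : Type u} [CompleteLattice A] (IA : ImplicativeAlgebra A)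

/-! ### Chains of hypotheses -/

/-- Left-nested chain of a finite family: `⊤ × g 0 × ⋯ × g (n-1)` (nested on the left). -/
noncomputable def chainT : ∀ {n : ℕ}, (Fin n → A) → A
  | 0, _ => ⊤
  | _+1, g => IA.times (chainT fun i => g i.castSucc) (g (Fin.last _))

theorem chainT_zero (g : Fin 0 → A) : IA.chainT g = ⊤ := rfl

theorem chainT_succ {n : ℕ} (g : Fin (n + 1) → A) :
    IA.chainT g = IA.times (IA.chainT fun i => g i.castSucc) (g (Fin.last n)) := rfl

/-- Projection out of a chain. -/
theorem chain_proj : ∀ (n : ℕ) (i : Fin n), ∃ r ∈ IA.Sig,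
    ∀ g : Fin n → A, r ≤ IA.imp (IA.chainT g) (g i) := by
  intro n
  induction n with
  | zero => exact fun i => i.elim0
  | succ n IH =>
    intro i
    induction i using Fin.lastCases with
    | last =>
      refine ⟨IA.ev (((Tm.var 0).app (.app .K (.const IA.Ic))).abs) [],
        IA.ev_mem (by simp [Tm.abs, Tm.Good, IA.Ic_mem]) (by simp), fun g => ?_⟩
      refine IA.le_imp_of_ap_le ?_
      refine le_trans (IA.ev_abs_ap _ _ _) ?_
      show IA.ap (IA.chainT g) (IA.ap IA.Kc IA.Ic) ≤ g (Fin.last n)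
      exact IA.times_snd (IA.chainT_succ g).le
    | cast j =>
      obtain ⟨r', hm, hr⟩ := IH j
      refine ⟨IA.ev (((Tm.const r').app ((Tm.var 0).app .K)).abs) [],
        IA.ev_mem (by simp [Tm.abs, Tm.Good, hm]) (by simp), fun g => ?_⟩
      refine IA.le_imp_of_ap_le ?_
      refine le_trans (IA.ev_abs_ap _ _ _) ?_
      show IA.ap r' (IA.ap (IA.chainT g) IA.Kc) ≤ g j.castSucc
      refine le_trans (IA.ap_mono le_rfl (IA.times_fst (IA.chainT_succ g).le)) ?_
      exact IA.ap_le (hr fun i => g i.castSucc)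

/-- Symmetrisation of a chain of equalities. -/
theorem chain_sym {S : A} (hSm : S ∈ IA.Sig)
    (hS : ∀ α β : PreW A, S ≤ IA.imp (IA.eqW α β) (IA.eqW β α)) :
    ∀ n : ℕ, ∃ r ∈ IA.Sig, ∀ a b : Fin n → PreW A,
      r ≤ IA.imp (IA.chainT fun i => IA.eqW (a i) (b i))
        (IA.chainT fun i => IA.eqW (b i) (a i)) := by
  intro n
  induction n with
  | zero => exact ⟨IA.Kc, IA.Kc_mem, fun a b => IA.le_imp_of_ap_le le_top⟩
  | succ n IH =>
    obtain ⟨r', hm, hr⟩ := IH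
    refine ⟨IA.ev ((((Tm.const IA.Pc).app ((Tm.const r').app ((Tm.var 0).app .K))).app
        ((Tm.const S).app ((Tm.var 0).app (.app .K (.const IA.Ic))))).abs) [],
      IA.ev_mem (by simp [Tm.abs, Tm.Good, hm, hSm, IA.Pc_mem, IA.Ic_mem]) (by simp),
      fun a b => ?_⟩
    refine IA.le_imp_of_ap_le ?_
    refine le_trans (IA.ev_abs_ap _ _ _) ?_
    show IA.ap (IA.ap IA.Pc (IA.ap r' (IA.ap (IA.chainT fun i => IA.eqW (a i) (b i)) IA.Kc)))
        (IA.ap S (IA.ap (IA.chainT fun i => IA.eqW (a i) (b i)) (IA.ap IA.Kc IA.Ic)))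
      ≤ IA.chainT fun i => IA.eqW (b i) (a i)
    rw [IA.chainT_succ fun i => IA.eqW (b i) (a i)]
    refine IA.pair_le ?_ ?_
    · refine le_trans (IA.ap_mono le_rfl (IA.times_fst (IA.chainT_succ _).le)) ?_
      exact IA.ap_le (hr (fun i => a i.castSucc) (fun i => b i.castSucc))
    · refine le_trans (IA.ap_mono le_rfl (IA.times_snd (IA.chainT_succ _).le)) ?_
      exact IA.ap_le (hS _ _)

/-- `cons`-reorganisation of a chain. -/
theorem chain_cons : ∀ n : ℕ, ∃ r ∈ IA.Sig, ∀ g : Fin (n + 1) → A,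
    r ≤ IA.imp (IA.times (g 0) (IA.chainT fun i => g i.succ)) (IA.chainT g) := by
  intro n
  induction n with
  | zero =>
    refine ⟨IA.ev (((Tm.var 0).app
        ((((Tm.const IA.Pc).app .K).app (.var 1)).abs.abs)).abs) [],
      IA.ev_mem (by simp [Tm.abs, Tm.Good, IA.Pc_mem]) (by simp), fun g => ?_⟩
    refine IA.le_imp_of_ap_le ?_
    refine le_trans (IA.ev_abs_ap _ _ _) ?_
    show IA.ap (IA.times (g 0) (IA.chainT fun i => g i.succ)) (IA.ev _
        [IA.times (g 0) (IA.chainT fun i => g i.succ)]) ≤ IA.chainT g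
    refine IA.times_ap le_rfl ?_
    refine IA.le_imp_of_ap_le ?_
    refine le_trans (IA.ev_abs_ap _ _ _) ?_
    refine IA.le_imp_of_ap_le ?_
    refine le_trans (IA.ev_abs_ap _ _ _) ?_
    show IA.ap (IA.ap IA.Pc IA.Kc) (g 0) ≤ IA.chainT g
    rw [IA.chainT_succ g]
    refine IA.pair_le le_top (le_of_eq (congrArg g ?_))
    exact (Fin.last_zero).symm
  | succ n IH =>
    obtain ⟨rn, hm, hrn⟩ := IH
    refine ⟨IA.ev (((Tm.var 0).app
        (((Tm.var 0).app
          ((((Tm.const IA.Pc).app ((Tm.const rn).app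
              (((Tm.const IA.Pc).app (.var 3)).app (.var 1)))).app
            (.var 0)).abs.abs)).abs.abs)).abs) [],
      IA.ev_mem (by simp [Tm.abs, Tm.Good, IA.Pc_mem, hm]) (by simp), fun g => ?_⟩
    refine IA.le_imp_of_ap_le ?_
    refine le_trans (IA.ev_abs_ap _ _ _) ?_
    set p : A := IA.times (g 0) (IA.chainT fun i => g i.succ) with hp
    show IA.ap p (IA.ev _ [p]) ≤ IA.chainT g
    refine IA.times_ap le_rfl ?_
    refine IA.le_imp_of_ap_le ?_
    refine le_trans (IA.ev_abs_ap _ _ _) ?_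
    refine IA.le_imp_of_ap_le ?_
    refine le_trans (IA.ev_abs_ap _ _ _) ?_
    set c : A := IA.chainT fun i => g i.succ with hc
    show IA.ap c (IA.ev _ [c, g 0, p]) ≤ IA.chainT g
    refine IA.times_ap (IA.chainT_succ fun i => g i.succ).le ?_
    refine IA.le_imp_of_ap_le ?_
    refine le_trans (IA.ev_abs_ap _ _ _) ?_
    refine IA.le_imp_of_ap_le ?_
    refine le_trans (IA.ev_abs_ap _ _ _) ?_
    show IA.ap (IA.ap IA.Pc ((IA.ap rn
        (IA.ap (IA.ap IA.Pc (g 0)) (IA.chainT fun i => g (i.succ).castSucc)))))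
      (g ((Fin.last n).succ)) ≤ IA.chainT g
    rw [IA.chainT_succ g]
    refine IA.pair_le ?_ (le_of_eq (congrArg g (Fin.succ_last n)))
    have hpair : IA.ap (IA.ap IA.Pc (g 0)) (IA.chainT fun i => g (i.succ).castSucc)
        ≤ IA.times ((fun i : Fin (n+1) => g i.castSucc) 0)
          (IA.chainT fun i => (fun j : Fin (n+1) => g j.castSucc) i.succ) := by
      refine IA.pair_le (le_of_eq (congrArg g (Fin.castSucc_zero).symm)) (le_of_eq ?_)
      refine congrArg IA.chainT ?_
      funext i
      exact congrArg g (Fin.succ_castSucc i).symm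
    refine le_trans (IA.ap_mono le_rfl hpair) ?_
    exact IA.ap_le (hrn fun i => g i.castSucc)

/-- Conversion from the `foldr`-form to the chain form. -/
theorem foldr_chain : ∀ n : ℕ, ∃ r ∈ IA.Sig, ∀ (g : Fin n → A) (t : A),
    r ≤ IA.imp ((List.ofFn g).foldr IA.times t) (IA.times (IA.chainT g) t) := by
  intro n
  induction n with
  | zero =>
    refine ⟨IA.ev ((((Tm.const IA.Pc).app .K).app (.var 0)).abs) [],
      IA.ev_mem (by simp [Tm.abs, Tm.Good, IA.Pc_mem]) (by simp), fun g t => ?_⟩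
    refine IA.le_imp_of_ap_le ?_
    refine le_trans (IA.ev_abs_ap _ _ _) ?_
    show IA.ap (IA.ap IA.Pc IA.Kc) ((List.ofFn g).foldr IA.times t) ≤ _
    rw [List.ofFn_zero, List.foldr_nil]
    exact IA.pair_le le_top le_rfl
  | succ n IH =>
    obtain ⟨rn, hm, hrn⟩ := IH
    obtain ⟨cc, hccm, hcc⟩ := IA.chain_cons n
    refine ⟨IA.ev (((Tm.var 0).app
        ((((Tm.const rn).app (.var 0)).app
          ((((Tm.const IA.Pc).app ((Tm.const cc).app
              (((Tm.const IA.Pc).app (.var 3)).app (.var 1)))).app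
            (.var 0)).abs.abs)).abs.abs)).abs) [],
      IA.ev_mem (by simp [Tm.abs, Tm.Good, IA.Pc_mem, hm, hccm]) (by simp),
      fun g t => ?_⟩
    rw [List.ofFn_succ, List.foldr_cons]
    refine IA.le_imp_of_ap_le ?_
    refine le_trans (IA.ev_abs_ap _ _ _) ?_
    set F : A := IA.times (g 0) ((List.ofFn fun i => g i.succ).foldr IA.times t) with hF
    show IA.ap F (IA.ev _ [F]) ≤ IA.times (IA.chainT g) t
    refine IA.times_ap le_rfl ?_
    refine IA.le_imp_of_ap_le ?_
    refine le_trans (IA.ev_abs_ap _ _ _) ?_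
    refine IA.le_imp_of_ap_le ?_
    refine le_trans (IA.ev_abs_ap _ _ _) ?_
    set Fol : A := (List.ofFn fun i => g i.succ).foldr IA.times t with hFol
    show IA.ap (IA.ap rn Fol) (IA.ev _ [Fol, g 0, F]) ≤ IA.times (IA.chainT g) t
    have h1 : IA.ap rn Fol ≤ IA.times (IA.chainT fun i => g i.succ) t :=
      IA.ap_le (hrn (fun i => g i.succ) t)
    refine IA.times_ap h1 ?_
    refine IA.le_imp_of_ap_le ?_
    refine le_trans (IA.ev_abs_ap _ _ _) ?_
    refine IA.le_imp_of_ap_le ?_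
    refine le_trans (IA.ev_abs_ap _ _ _) ?_
    show IA.ap (IA.ap IA.Pc (IA.ap cc
        (IA.ap (IA.ap IA.Pc (g 0)) (IA.chainT fun i => g i.succ)))) t
      ≤ IA.times (IA.chainT g) t
    refine IA.pair_le ?_ le_rfl
    refine le_trans (IA.ap_mono le_rfl (IA.pair_le le_rfl le_rfl)) ?_
    exact IA.ap_le (hcc g)

end ImplicativeAlgebra


namespace ImplicativeAlgebra

variable {A : Type u} [CompleteLattice A] (IA : ImplicativeAlgebra A)

/-! ### The main induction on formulas -/

theorem main_ind {R S T M1 M2 : A}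
    (hRm : R ∈ IA.Sig) (hSm : S ∈ IA.Sig) (hTm : T ∈ IA.Sig)
    (hM1m : M1 ∈ IA.Sig) (hM2m : M2 ∈ IA.Sig)
    (hR : ∀ α : PreW A, R ≤ IA.eqW α α)
    (hS : ∀ α β : PreW A, S ≤ IA.imp (IA.eqW α β) (IA.eqW β α))
    (hT : ∀ x y z : PreW A,
      T ≤ IA.imp (IA.eqW x y) (IA.imp (IA.eqW y z) (IA.eqW x z)))
    (hM1 : ∀ α α' β : PreW A,
      M1 ≤ IA.imp (IA.eqW α α') (IA.imp (IA.memW α β) (IA.memW α' β)))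
    (hM2 : ∀ α β β' : PreW A,
      M2 ≤ IA.imp (IA.eqW β β') (IA.imp (IA.memW α β) (IA.memW α β')))
    (κ : Cardinal.{u}) :
    ∀ {n : ℕ} (φ : SetFormula n), ∃ r ∈ IA.Sig,
      ∀ a b : Fin n → WSet A κ,
        r ≤ IA.imp (IA.chainT fun i => IA.eqW (a i).1 (b i).1)
          (IA.imp (IA.interp κ φ a) (IA.interp κ φ b)) := by
  intro n φ
  induction φ with
  | bot =>
    refine ⟨IA.ev (Tm.var 0).abs.abs [],
      IA.ev_mem (by simp [Tm.abs, Tm.Good]) (by simp), fun a b => ?_⟩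
    refine IA.le_imp_of_ap_le (IA.le_imp_of_ap_le ?_)
    refine le_trans (IA.ap_mono (IA.ev_abs_ap _ _ _) le_rfl) ?_
    refine le_trans (IA.ev_abs_ap _ _ _) ?_
    show (⊥ : A) ≤ IA.interp κ SetFormula.bot b
    exact bot_le
  | mem i j =>
    obtain ⟨pi, hpim, hpi⟩ := IA.chain_proj _ i
    obtain ⟨pj, hpjm, hpj⟩ := IA.chain_proj _ j
    refine ⟨IA.ev ((Tm.app (.app (.const M2) (.app (.const pj) (.var 1)))
        (.app (.app (.const M1) (.app (.const pi) (.var 1))) (.var 0))).abs.abs) [],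
      IA.ev_mem (by simp [Tm.abs, Tm.Good, hM1m, hM2m, hpim, hpjm]) (by simp),
      fun a b => ?_⟩
    refine IA.le_imp_of_ap_le (IA.le_imp_of_ap_le ?_)
    refine le_trans (IA.ap_mono (IA.ev_abs_ap _ _ _) le_rfl) ?_
    refine le_trans (IA.ev_abs_ap _ _ _) ?_
    show IA.ap (IA.ap M2 (IA.ap pj (IA.chainT fun i' => IA.eqW (a i').1 (b i').1)))
        (IA.ap (IA.ap M1 (IA.ap pi (IA.chainT fun i' => IA.eqW (a i').1 (b i').1)))
          (IA.interp κ (SetFormula.mem i j) a))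
      ≤ IA.interp κ (SetFormula.mem i j) b
    have hQi : IA.ap pi (IA.chainT fun i' => IA.eqW (a i').1 (b i').1)
        ≤ IA.eqW (a i).1 (b i).1 := IA.ap_le (hpi _)
    have hQj : IA.ap pj (IA.chainT fun i' => IA.eqW (a i').1 (b i').1)
        ≤ IA.eqW (a j).1 (b j).1 := IA.ap_le (hpj _)
    have hin : IA.ap (IA.ap M1 (IA.ap pi (IA.chainT fun i' => IA.eqW (a i').1 (b i').1)))
        (IA.interp κ (SetFormula.mem i j) a) ≤ IA.memW (b i).1 (a j).1 := by
      refine le_trans (IA.ap_mono (IA.ap_mono le_rfl hQi) le_rfl) ?_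
      exact IA.ap_le (IA.ap_le (hM1 (a i).1 (b i).1 (a j).1))
    refine le_trans (IA.ap_mono (IA.ap_mono le_rfl hQj) hin) ?_
    exact IA.ap_le (IA.ap_le (hM2 (b i).1 (a j).1 (b j).1))
  | eq i j =>
    obtain ⟨pi, hpim, hpi⟩ := IA.chain_proj _ i
    obtain ⟨pj, hpjm, hpj⟩ := IA.chain_proj _ j
    refine ⟨IA.ev ((Tm.app
        (.app (.const T) (.app (.const S) (.app (.const pi) (.var 1))))
        (.app (.app (.const T) (.var 0)) (.app (.const pj) (.var 1)))).abs.abs) [],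
      IA.ev_mem (by simp [Tm.abs, Tm.Good, hTm, hSm, hpim, hpjm]) (by simp),
      fun a b => ?_⟩
    refine IA.le_imp_of_ap_le (IA.le_imp_of_ap_le ?_)
    refine le_trans (IA.ap_mono (IA.ev_abs_ap _ _ _) le_rfl) ?_
    refine le_trans (IA.ev_abs_ap _ _ _) ?_
    show IA.ap (IA.ap T (IA.ap S (IA.ap pi (IA.chainT fun i' => IA.eqW (a i').1 (b i').1))))
        (IA.ap (IA.ap T (IA.interp κ (SetFormula.eq i j) a))
          (IA.ap pj (IA.chainT fun i' => IA.eqW (a i').1 (b i').1)))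
      ≤ IA.interp κ (SetFormula.eq i j) b
    have hQi : IA.ap pi (IA.chainT fun i' => IA.eqW (a i').1 (b i').1)
        ≤ IA.eqW (a i).1 (b i).1 := IA.ap_le (hpi _)
    have hQj : IA.ap pj (IA.chainT fun i' => IA.eqW (a i').1 (b i').1)
        ≤ IA.eqW (a j).1 (b j).1 := IA.ap_le (hpj _)
    have h1 : IA.ap S (IA.ap pi (IA.chainT fun i' => IA.eqW (a i').1 (b i').1))
        ≤ IA.eqW (b i).1 (a i).1 :=
      le_trans (IA.ap_mono le_rfl hQi) (IA.ap_le (hS _ _))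
    have h2 : IA.ap (IA.ap T (IA.interp κ (SetFormula.eq i j) a))
        (IA.ap pj (IA.chainT fun i' => IA.eqW (a i').1 (b i').1))
        ≤ IA.eqW (a i).1 (b j).1 :=
      le_trans (IA.ap_mono le_rfl hQj)
        (IA.ap_le (IA.ap_le (hT (a i).1 (a j).1 (b j).1)))
    exact le_trans (IA.ap_mono (IA.ap_mono le_rfl h1) h2)
      (IA.ap_le (IA.ap_le (hT (b i).1 (a i).1 (b j).1)))
  | and φ ψ ih1 ih2 =>
    obtain ⟨r1, h1m, h1⟩ := ih1
    obtain ⟨r2, h2m, h2⟩ := ih2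
    refine ⟨IA.ev (((Tm.var 0).app
        ((((Tm.const IA.Pc).app (.app (.app (.const r1) (.var 3)) (.var 1))).app
          (.app (.app (.const r2) (.var 3)) (.var 0))).abs.abs)).abs.abs) [],
      IA.ev_mem (by simp [Tm.abs, Tm.Good, IA.Pc_mem, h1m, h2m]) (by simp),
      fun a b => ?_⟩
    refine IA.le_imp_of_ap_le (IA.le_imp_of_ap_le ?_)
    refine le_trans (IA.ap_mono (IA.ev_abs_ap _ _ _) le_rfl) ?_
    refine le_trans (IA.ev_abs_ap _ _ _) ?_
    show IA.ap (IA.interp κ (SetFormula.and φ ψ) a)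
        (IA.ev _ [IA.interp κ (SetFormula.and φ ψ) a,
          IA.chainT fun i' => IA.eqW (a i').1 (b i').1])
      ≤ IA.interp κ (SetFormula.and φ ψ) b
    refine IA.times_ap (a := IA.interp κ φ a) (b := IA.interp κ ψ a) le_rfl ?_
    refine IA.le_imp_of_ap_le ?_
    refine le_trans (IA.ev_abs_ap _ _ _) ?_
    refine IA.le_imp_of_ap_le ?_
    refine le_trans (IA.ev_abs_ap _ _ _) ?_
    show IA.ap (IA.ap IA.Pc
        (IA.ap (IA.ap r1 (IA.chainT fun i' => IA.eqW (a i').1 (b i').1)) (IA.interp κ φ a)))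
        (IA.ap (IA.ap r2 (IA.chainT fun i' => IA.eqW (a i').1 (b i').1)) (IA.interp κ ψ a))
      ≤ IA.times (IA.interp κ φ b) (IA.interp κ ψ b)
    exact IA.pair_le (IA.ap_le (IA.ap_le (h1 a b))) (IA.ap_le (IA.ap_le (h2 a b)))
  | or φ ψ ih1 ih2 =>
    obtain ⟨r1, h1m, h1⟩ := ih1
    obtain ⟨r2, h2m, h2⟩ := ih2
    refine ⟨IA.ev ((((Tm.var 0).app
        ((Tm.app (.const IA.INLc) (.app (.app (.const r1) (.var 2)) (.var 0))).abs)).app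
        ((Tm.app (.const IA.INRc) (.app (.app (.const r2) (.var 2)) (.var 0))).abs)).abs.abs) [],
      IA.ev_mem (by simp [Tm.abs, Tm.Good, IA.INLc_mem, IA.INRc_mem, h1m, h2m]) (by simp),
      fun a b => ?_⟩
    refine IA.le_imp_of_ap_le (IA.le_imp_of_ap_le ?_)
    refine le_trans (IA.ap_mono (IA.ev_abs_ap _ _ _) le_rfl) ?_
    refine le_trans (IA.ev_abs_ap _ _ _) ?_
    show IA.ap (IA.ap (IA.interp κ (SetFormula.or φ ψ) a)
        (IA.ev _ [IA.interp κ (SetFormula.or φ ψ) a,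
          IA.chainT fun i' => IA.eqW (a i').1 (b i').1]))
        (IA.ev _ [IA.interp κ (SetFormula.or φ ψ) a,
          IA.chainT fun i' => IA.eqW (a i').1 (b i').1])
      ≤ IA.interp κ (SetFormula.or φ ψ) b
    refine IA.plus_ap (a := IA.interp κ φ a) (b := IA.interp κ ψ a) le_rfl ?_ ?_
    · refine IA.le_imp_of_ap_le ?_
      refine le_trans (IA.ev_abs_ap _ _ _) ?_
      show IA.ap IA.INLc
          (IA.ap (IA.ap r1 (IA.chainT fun i' => IA.eqW (a i').1 (b i').1)) (IA.interp κ φ a))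
        ≤ IA.interp κ (SetFormula.or φ ψ) b
      show _ ≤ IA.plus (IA.interp κ φ b) (IA.interp κ ψ b)
      exact IA.inl_le (IA.ap_le (IA.ap_le (h1 a b)))
    · refine IA.le_imp_of_ap_le ?_
      refine le_trans (IA.ev_abs_ap _ _ _) ?_
      show IA.ap IA.INRc
          (IA.ap (IA.ap r2 (IA.chainT fun i' => IA.eqW (a i').1 (b i').1)) (IA.interp κ ψ a))
        ≤ IA.interp κ (SetFormula.or φ ψ) b
      show _ ≤ IA.plus (IA.interp κ φ b) (IA.interp κ ψ b)
      exact IA.inr_le (IA.ap_le (IA.ap_le (h2 a b)))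
  | imp φ ψ ih1 ih2 =>
    obtain ⟨r1, h1m, h1⟩ := ih1
    obtain ⟨r2, h2m, h2⟩ := ih2
    obtain ⟨sw, hswm, hsw⟩ := IA.chain_sym hSm hS _
    refine ⟨IA.ev ((Tm.app (.app (.const r2) (.var 2))
        (.app (.var 1) (.app (.app (.const r1) (.app (.const sw) (.var 2)))
          (.var 0)))).abs.abs.abs) [],
      IA.ev_mem (by simp [Tm.abs, Tm.Good, h1m, h2m, hswm]) (by simp),
      fun a b => ?_⟩
    refine IA.le_imp_of_ap_le (IA.le_imp_of_ap_le (IA.le_imp_of_ap_le ?_))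
    refine le_trans (IA.ap_mono (IA.ap_mono (IA.ev_abs_ap _ _ _) le_rfl) le_rfl) ?_
    refine le_trans (IA.ap_mono (IA.ev_abs_ap _ _ _) le_rfl) ?_
    refine le_trans (IA.ev_abs_ap _ _ _) ?_
    show IA.ap (IA.ap r2 (IA.chainT fun i' => IA.eqW (a i').1 (b i').1))
        (IA.ap (IA.interp κ (SetFormula.imp φ ψ) a)
          (IA.ap (IA.ap r1 (IA.ap sw (IA.chainT fun i' => IA.eqW (a i').1 (b i').1)))
            (IA.interp κ φ b)))
      ≤ IA.interp κ ψ b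
    have hswQ : IA.ap sw (IA.chainT fun i' => IA.eqW (a i').1 (b i').1)
        ≤ IA.chainT fun i' => IA.eqW (b i').1 (a i').1 :=
      IA.ap_le (hsw (fun i' => (a i').1) (fun i' => (b i').1))
    have h1' : IA.ap (IA.ap r1 (IA.ap sw (IA.chainT fun i' => IA.eqW (a i').1 (b i').1)))
        (IA.interp κ φ b) ≤ IA.interp κ φ a :=
      le_trans (IA.ap_mono (IA.ap_mono le_rfl hswQ) le_rfl)
        (IA.ap_le (IA.ap_le (h1 b a)))
    have h2' : IA.ap (IA.interp κ (SetFormula.imp φ ψ) a)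
        (IA.ap (IA.ap r1 (IA.ap sw (IA.chainT fun i' => IA.eqW (a i').1 (b i').1)))
          (IA.interp κ φ b)) ≤ IA.interp κ ψ a :=
      le_trans (IA.ap_mono le_rfl h1') (IA.ap_le le_rfl)
    exact le_trans (IA.ap_mono le_rfl h2') (IA.ap_le (IA.ap_le (h2 a b)))
  | ex φ ih =>
    rename_i m
    obtain ⟨r', hm, hr'⟩ := ih
    refine ⟨IA.ev (((Tm.var 0).app
        ((Tm.app (.const IA.EIc) (.app (.app (.const r')
          (.app (.app (.const IA.Pc) (.var 2)) (.const R))) (.var 0))).abs)).abs.abs) [],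
      IA.ev_mem (by simp [Tm.abs, Tm.Good, IA.EIc_mem, IA.Pc_mem, hm, hRm]) (by simp),
      fun a b => ?_⟩
    refine IA.le_imp_of_ap_le (IA.le_imp_of_ap_le ?_)
    refine le_trans (IA.ap_mono (IA.ev_abs_ap _ _ _) le_rfl) ?_
    refine le_trans (IA.ev_abs_ap _ _ _) ?_
    show IA.ap (IA.aex fun β : WSet A κ => IA.interp κ φ (Fin.snoc a β))
        (IA.ev _ [IA.interp κ (SetFormula.ex φ) a,
          IA.chainT fun i' => IA.eqW (a i').1 (b i').1])
      ≤ IA.aex fun β : WSet A κ => IA.interp κ φ (Fin.snoc b β)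
    refine IA.ap_aex fun β => ?_
    refine IA.le_imp_of_ap_le ?_
    refine le_trans (IA.ev_abs_ap _ _ _) ?_
    show IA.ap IA.EIc (IA.ap (IA.ap r'
        (IA.ap (IA.ap IA.Pc (IA.chainT fun i' => IA.eqW (a i').1 (b i').1)) R))
        (IA.interp κ φ (Fin.snoc a β)))
      ≤ IA.aex fun β : WSet A κ => IA.interp κ φ (Fin.snoc b β)
    have hfun : (fun i : Fin m => IA.eqW (Fin.snoc (α := fun _ => WSet A κ) a β i.castSucc).1
        (Fin.snoc (α := fun _ => WSet A κ) b β i.castSucc).1) = fun i' => IA.eqW (a i').1 (b i').1 := by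
      funext i'
      rw [Fin.snoc_castSucc, Fin.snoc_castSucc]
    have hP : IA.ap (IA.ap IA.Pc (IA.chainT fun i' => IA.eqW (a i').1 (b i').1)) R
        ≤ IA.chainT fun i => IA.eqW (Fin.snoc (α := fun _ => WSet A κ) a β i).1
          (Fin.snoc (α := fun _ => WSet A κ) b β i).1 := by
      rw [IA.chainT_succ]
      refine IA.pair_le (le_of_eq (congrArg IA.chainT hfun).symm) ?_
      rw [Fin.snoc_last, Fin.snoc_last]
      exact hR β.1
    exact IA.aexI_le β (le_trans (IA.ap_mono (IA.ap_mono le_rfl hP) le_rfl)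
      (IA.ap_le (IA.ap_le (hr' (Fin.snoc a β) (Fin.snoc b β)))))
  | all φ ih =>
    rename_i m
    obtain ⟨r', hm, hr'⟩ := ih
    refine ⟨IA.ev ((Tm.app (.app (.const r')
        (.app (.app (.const IA.Pc) (.var 1)) (.const R))) (.var 0)).abs.abs) [],
      IA.ev_mem (by simp [Tm.abs, Tm.Good, IA.Pc_mem, hm, hRm]) (by simp),
      fun a b => ?_⟩
    refine IA.le_imp_of_ap_le (IA.le_imp_of_ap_le ?_)
    refine le_trans (IA.ap_mono (IA.ev_abs_ap _ _ _) le_rfl) ?_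
    refine le_trans (IA.ev_abs_ap _ _ _) ?_
    show IA.ap (IA.ap r'
        (IA.ap (IA.ap IA.Pc (IA.chainT fun i' => IA.eqW (a i').1 (b i').1)) R))
        (IA.interp κ (SetFormula.all φ) a)
      ≤ ⨅ β : WSet A κ, IA.interp κ φ (Fin.snoc b β)
    refine le_iInf fun β => ?_
    have hfun : (fun i : Fin m => IA.eqW (Fin.snoc (α := fun _ => WSet A κ) a β i.castSucc).1
        (Fin.snoc (α := fun _ => WSet A κ) b β i.castSucc).1) = fun i' => IA.eqW (a i').1 (b i').1 := by
      funext i'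
      rw [Fin.snoc_castSucc, Fin.snoc_castSucc]
    have hP : IA.ap (IA.ap IA.Pc (IA.chainT fun i' => IA.eqW (a i').1 (b i').1)) R
        ≤ IA.chainT fun i => IA.eqW (Fin.snoc (α := fun _ => WSet A κ) a β i).1
          (Fin.snoc (α := fun _ => WSet A κ) b β i).1 := by
      rw [IA.chainT_succ]
      refine IA.pair_le (le_of_eq (congrArg IA.chainT hfun).symm) ?_
      rw [Fin.snoc_last, Fin.snoc_last]
      exact hR β.1
    have hh : IA.interp κ (SetFormula.all φ) a ≤ IA.interp κ φ (Fin.snoc a β) :=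
      iInf_le (fun β : WSet A κ => IA.interp κ φ (Fin.snoc a β)) β
    exact le_trans (IA.ap_mono (IA.ap_mono le_rfl hP) hh)
      (IA.ap_le (IA.ap_le (hr' (Fin.snoc a β) (Fin.snoc b β))))

end ImplicativeAlgebra


theorem stmt6 {A : Type u} [CompleteLattice A] (IA : ImplicativeAlgebra A)
    (κ : Cardinal.{u}) (hκ : κ.IsInaccessible) (hA : Cardinal.mk A < κ) (n : ℕ) (φ : SetFormula n) :
    ∃ r ∈ IA.Sig, r ≤ ⨅ a : Fin n → WSet A κ, ⨅ b : Fin n → WSet A κ,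
      IA.imp
        ((List.ofFn fun i : Fin n => IA.eqW (a i).1 (b i).1).foldr IA.times
          (IA.interp κ φ a))
        (IA.interp κ φ b) := by
  obtain ⟨R, hRm, hR⟩ := IA.exists_refl
  obtain ⟨S, hSm, hS⟩ := IA.exists_sym
  obtain ⟨T, hTm, hT⟩ := IA.exists_trans
  obtain ⟨M1, hM1m, hM1⟩ := IA.memL_of_trans hTm hT
  obtain ⟨M2, hM2m, hM2⟩ := IA.memR_of_trans hTm hT
  obtain ⟨r, hrm, hr⟩ := IA.main_ind hRm hSm hTm hM1m hM2m hR hS hT hM1 hM2 κ φ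
  obtain ⟨c, hcm, hc⟩ := IA.foldr_chain n
  refine ⟨IA.ev ((Tm.app (Tm.app (.const c) (.var 0)) (.const r)).abs) [],
    IA.ev_mem (by simp [Tm.abs, Tm.Good, hcm, hrm]) (by simp), ?_⟩
  refine le_iInf fun a => le_iInf fun b => IA.le_imp_of_ap_le ?_
  refine le_trans (IA.ev_abs_ap _ _ _) ?_
  show IA.ap (IA.ap c ((List.ofFn fun i : Fin n => IA.eqW (a i).1 (b i).1).foldr
      IA.times (IA.interp κ φ a))) r ≤ IA.interp κ φ b
  refine le_trans (IA.ap_mono (IA.ap_le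
    (hc (fun i => IA.eqW (a i).1 (b i).1) (IA.interp κ φ a))) le_rfl) ?_
  exact IA.times_ap le_rfl (hr a b)
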